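/- If ∑_{all i}(α_i·s_i + P_i) ≤ m·T, where α_i = ⌈P_i/(T−s_i)⌉, then m_nice ≤ m. (This is the arithmetic content of Theorem 3(i): if m < m_nice, then no feasible schedule with makespan T exists, i.e., T < OPT.) -/

import Mathlib

open Finset

variable {ι : Type*} [DecidableEq ι]

/-- The set of classes of a given type (types ①–⑧ are indexed by `Fin 8`,
with `0 ↔ ①`, `1 ↔ ②`, `2 ↔ ③`, `3 ↔ ④`, `4 ↔ ⑤`, `5 ↔ ⑥`, `6 ↔ ⑦`, `7 ↔ ⑧`). -/
def typeSet (C : Finset ι) (typ : ι → Fin 8) (k : Fin 8) : Finset ι :=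
  C.filter fun i => typ i = k

/-- `α'_i = ⌊P_i/(T - s_i)⌋` (floor of a real, taken in ℕ). -/
noncomputable def alpha' (T : ℝ) (s P : ι → ℝ) (i : ι) : ℕ :=
  ⌊P i / (T - s i)⌋₊

/-- `α_i = ⌈P_i/(T - s_i)⌉` (ceiling of a real, taken in ℕ). -/
noncomputable def alphaCeil (T : ℝ) (s P : ι → ℝ) (i : ι) : ℕ :=
  ⌈P i / (T - s i)⌉₊

/-- The obligatory load `L_nice` of a nice instance. -/
noncomputable def Lnice (T : ℝ) (C : Finset ι) (s P : ι → ℝ) (typ : ι → Fin 8) : ℝ :=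
  (∑ i ∈ typeSet C typ 0 ∪ typeSet C typ 1, (alpha' T s P i : ℝ) * s i)
    + (∑ i ∈ typeSet C typ 2, 2 * s i)
    + (∑ i ∈ typeSet C typ 3 ∪ typeSet C typ 4 ∪ typeSet C typ 5 ∪ typeSet C typ 6
        ∪ typeSet C typ 7, s i)
    + ∑ i ∈ C, P i

/-- The residual load `r_nice`. -/
noncomputable def rnice (C : Finset ι) (s P : ι → ℝ) (typ : ι → Fin 8)
    (R3 R5 R6 : Finset ι) : ℝ :=
  (∑ i ∈ R3, (2 * s i + P i))
    + ∑ i ∈ R5 ∪ R6 ∪ typeSet C typ 6 ∪ typeSet C typ 7, (s i + P i)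

/-- The machine lower bound `m_nice`. -/
noncomputable def mnice (T : ℝ) (C : Finset ι) (s P : ι → ℝ) (typ : ι → Fin 8)
    (R3 R5 R6 : Finset ι) : ℕ :=
  (∑ i ∈ typeSet C typ 0 ∪ typeSet C typ 1, alpha' T s P i)
    + 3 * ((typeSet C typ 2).card / 2)
    + (typeSet C typ 3).card
    + (typeSet C typ 4).card / 2
    + (typeSet C typ 5).card / 3
    + ⌈rnice C s P typ R3 R5 R6 / T⌉₊

private lemma aux_floorT (T : ℝ) (s P : ι → ℝ) {i : ι} (hs0 : 0 ≤ s i) (hsT : s i < T)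
    (hPi : 0 < P i) :
    (alpha' T s P i : ℝ) * T ≤ (alphaCeil T s P i : ℝ) * s i + P i := by
  have hTs : 0 < T - s i := by linarith
  have h1 : (alpha' T s P i : ℝ) ≤ P i / (T - s i) :=
    Nat.floor_le (le_of_lt (div_pos hPi hTs))
  rw [le_div_iff₀ hTs] at h1
  have h3 : (alpha' T s P i : ℝ) ≤ (alphaCeil T s P i : ℝ) := by
    exact_mod_cast Nat.floor_le_ceil (P i / (T - s i))
  nlinarith

private lemma aux_sp (T : ℝ) (s P : ι → ℝ) {i : ι} (hs0 : 0 ≤ s i) (hsT : s i < T)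
    (hPi : 0 < P i) :
    s i + P i ≤ (alphaCeil T s P i : ℝ) * s i + P i := by
  have hTs : 0 < T - s i := by linarith
  have h0 : 0 < alphaCeil T s P i := Nat.ceil_pos.mpr (div_pos hPi hTs)
  have h1 : (1 : ℝ) ≤ (alphaCeil T s P i : ℝ) := by exact_mod_cast h0
  nlinarith

private lemma aux_two (T : ℝ) (s P : ι → ℝ) {i : ι} (hs0 : 0 ≤ s i) (hsT : s i < T)
    (hTP : T - s i < P i) :
    2 * s i + P i ≤ (alphaCeil T s P i : ℝ) * s i + P i := by
  have hTs : 0 < T - s i := by linarith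
  have h0 : (1 : ℝ) < P i / (T - s i) := (one_lt_div hTs).mpr hTP
  have h1 : 1 < alphaCeil T s P i := Nat.lt_ceil.mpr (by exact_mod_cast h0)
  have h2 : (2 : ℝ) ≤ (alphaCeil T s P i : ℝ) := by exact_mod_cast h1
  nlinarith

private lemma split_bound (S R : Finset ι) (hR : R ⊆ S) (g f : ι → ℝ) (b : ℝ)
    (hgf : ∀ i ∈ S, g i ≤ f i) (hb : ∀ i ∈ S, b ≤ f i) :
    ((S \ R).card : ℝ) * b + ∑ i ∈ R, g i ≤ ∑ i ∈ S, f i := by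
  rw [← Finset.sum_sdiff hR]
  have h1 : ((S \ R).card : ℝ) * b ≤ ∑ i ∈ S \ R, f i := by
    have := Finset.card_nsmul_le_sum (S \ R) f b
      (fun i hi => hb i (Finset.mem_sdiff.mp hi).1)
    simpa [nsmul_eq_mul] using this
  have h2 : ∑ i ∈ R, g i ≤ ∑ i ∈ R, f i :=
    Finset.sum_le_sum fun i hi => hgf i (hR hi)
  linarith

/-- arithmetic content of Theorem 3(i):
if `∑ i (α_i·s_i + P_i) ≤ m·T` then `m_nice ≤ m`. -/
theorem stmt_7 (T : ℝ) (hT : 0 < T) (m : ℕ) (hm : 1 ≤ m)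
    (C : Finset ι) (s P : ι → ℝ) (typ : ι → Fin 8)
    (hs : ∀ i ∈ C, 0 ≤ s i ∧ s i < T) (hP : ∀ i ∈ C, 0 < P i)
    (h1 : ∀ i ∈ C, typ i = 0 →
      2 * T / 3 ≤ s i ∧ T ≤ s i + P i ∧ s i + P i ≤ (m : ℝ) * T)
    (h2 : ∀ i ∈ C, typ i = 1 →
      T / 3 ≤ s i ∧ s i < 2 * T / 3 ∧ 2 * T - s i ≤ s i + P i ∧ s i + P i ≤ (m : ℝ) * T)
    (h3 : ∀ i ∈ C, typ i = 2 →
      T / 3 ≤ s i ∧ s i < 2 * T / 3 ∧ 4 * T / 3 < s i + P i ∧ s i + P i < 2 * T - s i)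
    (h4 : ∀ i ∈ C, typ i = 3 →
      T / 3 ≤ s i ∧ s i < 2 * T / 3 ∧ T ≤ s i + P i ∧ s i + P i ≤ 4 * T / 3)
    (h5 : ∀ i ∈ C, typ i = 4 →
      T / 3 ≤ s i ∧ s i < 2 * T / 3 ∧ T / 2 < s i + P i ∧ s i + P i ≤ 2 * T / 3)
    (h6 : ∀ i ∈ C, typ i = 5 →
      T / 3 ≤ s i ∧ s i < 2 * T / 3 ∧ T / 3 < s i + P i ∧ s i + P i ≤ 4 * T / 9)
    (h7 : ∀ i ∈ C, typ i = 6 → 0 ≤ s i ∧ s i < T / 3)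
    (h8 : ∀ i ∈ C, typ i = 7 →
      T / 3 ≤ s i ∧ s i < 2 * T / 3 ∧ 4 * T / 9 < s i + P i ∧ s i + P i ≤ T / 2)
    (R3 R5 R6 : Finset ι)
    (hR3 : R3 ⊆ typeSet C typ 2)
    (hR3card : R3.card = (typeSet C typ 2).card - 2 * ((typeSet C typ 2).card / 2))
    (hR5 : R5 ⊆ typeSet C typ 4)
    (hR5card : R5.card = (typeSet C typ 4).card - 2 * ((typeSet C typ 4).card / 2))
    (hR6 : R6 ⊆ typeSet C typ 5)
    (hR6card : R6.card = (typeSet C typ 5).card - 3 * ((typeSet C typ 5).card / 3))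
    (hL : ∑ i ∈ C, ((alphaCeil T s P i : ℝ) * s i + P i) ≤ (m : ℝ) * T) :
    mnice T C s P typ R3 R5 R6 ≤ m := by
  classical
  -- membership in a type set
  have hmem : ∀ (k : Fin 8), ∀ i ∈ typeSet C typ k, i ∈ C ∧ typ i = k := by
    intro k i hi
    simpa [typeSet] using hi
  have hsub : ∀ (k : Fin 8), typeSet C typ k ⊆ C := fun k i hi => (hmem k i hi).1
  -- disjointness of type sets
  have hdisj : ∀ k l : Fin 8, k ≠ l → Disjoint (typeSet C typ k) (typeSet C typ l) := by
    intro k l hkl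
    rw [Finset.disjoint_left]
    intro i hik hil
    exact hkl (((hmem k i hik).2.symm).trans (hmem l i hil).2)
  -- fiber decomposition of the load
  have hdecomp : ∑ i ∈ C, ((alphaCeil T s P i : ℝ) * s i + P i)
      = ∑ k : Fin 8, ∑ i ∈ typeSet C typ k,
          ((alphaCeil T s P i : ℝ) * s i + P i) :=
    (Finset.sum_fiberwise C typ _).symm
  rw [Fin.sum_univ_eight] at hdecomp
  -- type ① and ② bounds
  have hfib0 : ((∑ i ∈ typeSet C typ 0, alpha' T s P i : ℕ) : ℝ) * T
      ≤ ∑ i ∈ typeSet C typ 0, ((alphaCeil T s P i : ℝ) * s i + P i) := by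
    rw [Nat.cast_sum, Finset.sum_mul]
    refine Finset.sum_le_sum fun i hi => ?_
    obtain ⟨hiC, -⟩ := hmem 0 i hi
    exact aux_floorT T s P (hs i hiC).1 (hs i hiC).2 (hP i hiC)
  have hfib1 : ((∑ i ∈ typeSet C typ 1, alpha' T s P i : ℕ) : ℝ) * T
      ≤ ∑ i ∈ typeSet C typ 1, ((alphaCeil T s P i : ℝ) * s i + P i) := by
    rw [Nat.cast_sum, Finset.sum_mul]
    refine Finset.sum_le_sum fun i hi => ?_
    obtain ⟨hiC, -⟩ := hmem 1 i hi
    exact aux_floorT T s P (hs i hiC).1 (hs i hiC).2 (hP i hiC)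
  -- type ③ bound
  have hg3 : ∀ i ∈ typeSet C typ 2, 2 * s i + P i
      ≤ (alphaCeil T s P i : ℝ) * s i + P i := by
    intro i hi
    obtain ⟨hiC, hit⟩ := hmem 2 i hi
    obtain ⟨ha, hb, hc, hd⟩ := h3 i hiC hit
    exact aux_two T s P (hs i hiC).1 (hs i hiC).2 (by linarith)
  have hb3 : ∀ i ∈ typeSet C typ 2, 3 * T / 2
      ≤ (alphaCeil T s P i : ℝ) * s i + P i := by
    intro i hi
    obtain ⟨hiC, hit⟩ := hmem 2 i hi
    obtain ⟨ha, hb, hc, hd⟩ := h3 i hiC hit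
    have := hg3 i hi
    linarith
  have hc3 : ((typeSet C typ 2 \ R3).card : ℝ)
      = 2 * (((typeSet C typ 2).card / 2 : ℕ) : ℝ) := by
    have : (typeSet C typ 2 \ R3).card = 2 * ((typeSet C typ 2).card / 2) := by
      rw [Finset.card_sdiff_of_subset hR3, hR3card]; omega
    rw [this]; push_cast; ring
  have hfib2 : 3 * (((typeSet C typ 2).card / 2 : ℕ) : ℝ) * T
        + ∑ i ∈ R3, (2 * s i + P i)
      ≤ ∑ i ∈ typeSet C typ 2, ((alphaCeil T s P i : ℝ) * s i + P i) := by
    have := split_bound (typeSet C typ 2) R3 hR3 (fun i => 2 * s i + P i)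
      (fun i => (alphaCeil T s P i : ℝ) * s i + P i) (3 * T / 2) hg3 hb3
    rw [hc3] at this
    linarith
  -- type ④ bound
  have hfib3 : ((typeSet C typ 3).card : ℝ) * T
      ≤ ∑ i ∈ typeSet C typ 3, ((alphaCeil T s P i : ℝ) * s i + P i) := by
    have := Finset.card_nsmul_le_sum (typeSet C typ 3)
      (fun i => (alphaCeil T s P i : ℝ) * s i + P i) T (fun i hi => by
        obtain ⟨hiC, hit⟩ := hmem 3 i hi
        obtain ⟨ha, hb, hc, hd⟩ := h4 i hiC hit
        have := aux_sp T s P (hs i hiC).1 (hs i hiC).2 (hP i hiC)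
        show T ≤ (alphaCeil T s P i : ℝ) * s i + P i
        linarith)
    simpa [nsmul_eq_mul] using this
  -- type ⑤ bound
  have hg5 : ∀ i ∈ typeSet C typ 4, s i + P i
      ≤ (alphaCeil T s P i : ℝ) * s i + P i := fun i hi => by
    obtain ⟨hiC, -⟩ := hmem 4 i hi
    exact aux_sp T s P (hs i hiC).1 (hs i hiC).2 (hP i hiC)
  have hb5 : ∀ i ∈ typeSet C typ 4, T / 2
      ≤ (alphaCeil T s P i : ℝ) * s i + P i := by
    intro i hi
    obtain ⟨hiC, hit⟩ := hmem 4 i hi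
    obtain ⟨ha, hb, hc, hd⟩ := h5 i hiC hit
    have := hg5 i hi
    linarith
  have hc5 : ((typeSet C typ 4 \ R5).card : ℝ)
      = 2 * (((typeSet C typ 4).card / 2 : ℕ) : ℝ) := by
    have : (typeSet C typ 4 \ R5).card = 2 * ((typeSet C typ 4).card / 2) := by
      rw [Finset.card_sdiff_of_subset hR5, hR5card]; omega
    rw [this]; push_cast; ring
  have hfib4 : (((typeSet C typ 4).card / 2 : ℕ) : ℝ) * T
        + ∑ i ∈ R5, (s i + P i)
      ≤ ∑ i ∈ typeSet C typ 4, ((alphaCeil T s P i : ℝ) * s i + P i) := by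
    have := split_bound (typeSet C typ 4) R5 hR5 (fun i => s i + P i)
      (fun i => (alphaCeil T s P i : ℝ) * s i + P i) (T / 2) hg5 hb5
    rw [hc5] at this
    linarith
  -- type ⑥ bound
  have hg6 : ∀ i ∈ typeSet C typ 5, s i + P i
      ≤ (alphaCeil T s P i : ℝ) * s i + P i := fun i hi => by
    obtain ⟨hiC, -⟩ := hmem 5 i hi
    exact aux_sp T s P (hs i hiC).1 (hs i hiC).2 (hP i hiC)
  have hb6 : ∀ i ∈ typeSet C typ 5, T / 3
      ≤ (alphaCeil T s P i : ℝ) * s i + P i := by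
    intro i hi
    obtain ⟨hiC, hit⟩ := hmem 5 i hi
    obtain ⟨ha, hb, hc, hd⟩ := h6 i hiC hit
    have := hg6 i hi
    linarith
  have hc6 : ((typeSet C typ 5 \ R6).card : ℝ)
      = 3 * (((typeSet C typ 5).card / 3 : ℕ) : ℝ) := by
    have : (typeSet C typ 5 \ R6).card = 3 * ((typeSet C typ 5).card / 3) := by
      rw [Finset.card_sdiff_of_subset hR6, hR6card]; omega
    rw [this]; push_cast; ring
  have hfib5 : (((typeSet C typ 5).card / 3 : ℕ) : ℝ) * T
        + ∑ i ∈ R6, (s i + P i)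
      ≤ ∑ i ∈ typeSet C typ 5, ((alphaCeil T s P i : ℝ) * s i + P i) := by
    have := split_bound (typeSet C typ 5) R6 hR6 (fun i => s i + P i)
      (fun i => (alphaCeil T s P i : ℝ) * s i + P i) (T / 3) hg6 hb6
    rw [hc6] at this
    linarith
  -- type ⑦ and ⑧ bounds
  have hfib6 : ∑ i ∈ typeSet C typ 6, (s i + P i)
      ≤ ∑ i ∈ typeSet C typ 6, ((alphaCeil T s P i : ℝ) * s i + P i) :=
    Finset.sum_le_sum fun i hi => by
      obtain ⟨hiC, -⟩ := hmem 6 i hi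
      exact aux_sp T s P (hs i hiC).1 (hs i hiC).2 (hP i hiC)
  have hfib7 : ∑ i ∈ typeSet C typ 7, (s i + P i)
      ≤ ∑ i ∈ typeSet C typ 7, ((alphaCeil T s P i : ℝ) * s i + P i) :=
    Finset.sum_le_sum fun i hi => by
      obtain ⟨hiC, -⟩ := hmem 7 i hi
      exact aux_sp T s P (hs i hiC).1 (hs i hiC).2 (hP i hiC)
  -- decomposition of rnice
  have hd56 : Disjoint R5 R6 := (hdisj 4 5 (by decide)).mono hR5 hR6
  have hd567 : Disjoint (R5 ∪ R6) (typeSet C typ 6) :=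
    Finset.disjoint_union_left.mpr
      ⟨(hdisj 4 6 (by decide)).mono hR5 le_rfl,
       (hdisj 5 6 (by decide)).mono hR6 le_rfl⟩
  have hd5678 : Disjoint (R5 ∪ R6 ∪ typeSet C typ 6) (typeSet C typ 7) :=
    Finset.disjoint_union_left.mpr
      ⟨Finset.disjoint_union_left.mpr
        ⟨(hdisj 4 7 (by decide)).mono hR5 le_rfl,
         (hdisj 5 7 (by decide)).mono hR6 le_rfl⟩,
       hdisj 6 7 (by decide)⟩
  have hrdef : rnice C s P typ R3 R5 R6
      = ∑ i ∈ R3, (2 * s i + P i) + (∑ i ∈ R5, (s i + P i) + ∑ i ∈ R6, (s i + P i)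
        + ∑ i ∈ typeSet C typ 6, (s i + P i) + ∑ i ∈ typeSet C typ 7, (s i + P i)) := by
    unfold rnice
    rw [Finset.sum_union hd5678, Finset.sum_union hd567, Finset.sum_union hd56]
  -- rnice is nonnegative
  have hspC : ∀ i ∈ C, (0:ℝ) ≤ s i + P i := fun i hi => by
    have := (hs i hi).1; have := hP i hi; linarith
  have hr0 : 0 ≤ rnice C s P typ R3 R5 R6 := by
    rw [hrdef]
    have t3 : (0:ℝ) ≤ ∑ i ∈ R3, (2 * s i + P i) :=
      Finset.sum_nonneg fun i hi => by
        have hiC := hsub 2 (hR3 hi)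
        have := (hs i hiC).1; have := hP i hiC; linarith
    have t5 : (0:ℝ) ≤ ∑ i ∈ R5, (s i + P i) :=
      Finset.sum_nonneg fun i hi => hspC i (hsub 4 (hR5 hi))
    have t6 : (0:ℝ) ≤ ∑ i ∈ R6, (s i + P i) :=
      Finset.sum_nonneg fun i hi => hspC i (hsub 5 (hR6 hi))
    have t7 : (0:ℝ) ≤ ∑ i ∈ typeSet C typ 6, (s i + P i) :=
      Finset.sum_nonneg fun i hi => hspC i (hsub 6 hi)
    have t8 : (0:ℝ) ≤ ∑ i ∈ typeSet C typ 7, (s i + P i) :=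
      Finset.sum_nonneg fun i hi => hspC i (hsub 7 hi)
    linarith
  -- ceiling bound
  have hceil : (⌈rnice C s P typ R3 R5 R6 / T⌉₊ : ℝ) * T
      < rnice C s P typ R3 R5 R6 + T := by
    have h := Nat.ceil_lt_add_one (div_nonneg hr0 hT.le)
    have h2 : (⌈rnice C s P typ R3 R5 R6 / T⌉₊ : ℝ) * T
        < (rnice C s P typ R3 R5 R6 / T + 1) * T :=
      mul_lt_mul_of_pos_right h hT
    have h3 : (rnice C s P typ R3 R5 R6 / T + 1) * T
        = rnice C s P typ R3 R5 R6 + T := by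
      field_simp
    linarith
  -- expand mnice
  have hmn : (mnice T C s P typ R3 R5 R6 : ℝ)
      = ((∑ i ∈ typeSet C typ 0, alpha' T s P i : ℕ) : ℝ)
        + ((∑ i ∈ typeSet C typ 1, alpha' T s P i : ℕ) : ℝ)
        + 3 * (((typeSet C typ 2).card / 2 : ℕ) : ℝ)
        + ((typeSet C typ 3).card : ℝ)
        + (((typeSet C typ 4).card / 2 : ℕ) : ℝ)
        + (((typeSet C typ 5).card / 3 : ℕ) : ℝ)
        + (⌈rnice C s P typ R3 R5 R6 / T⌉₊ : ℝ) := by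
    unfold mnice
    rw [Finset.sum_union (hdisj 0 1 (by decide))]
    push_cast
    ring
  -- final computation
  have key : (mnice T C s P typ R3 R5 R6 : ℝ) * T < ((m : ℝ) + 1) * T := by
    rw [hmn]
    linarith [hfib0, hfib1, hfib2, hfib3, hfib4, hfib5, hfib6, hfib7,
      hceil, hL, hdecomp, hrdef]
  have key2 : (mnice T C s P typ R3 R5 R6 : ℝ) < (m : ℝ) + 1 :=
    lt_of_mul_lt_mul_right key hT.le
  have key3 : mnice T C s P typ R3 R5 R6 < m + 1 := by exact_mod_cast key2
  omega
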